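/- Combining the pointwise mixture bound, the oracle decomposition, and Jensen's inequality for min: if per-example fused loss satisfies ℓ_F ≤ (1−α)ℓ_B + α ℓ_D with α = α⋆ (the oracle gate σ-measurable with respect to H) almost surely, and b(H) = E[ℓ_B|H], d(H) = E[ℓ_D|H], then E[ℓ_F] ≤ E[min(b(H), d(H))] ≤ min(E[ℓ_B], E[ℓ_D]). -/
import Mathlib


open MeasureTheory

/-- Full conclusion of the fusion theorem: with `b = E[ℓ_B|H]`, `d = E[ℓ_D|H]` the
conditional losses w.r.t. the sub-σ-algebra `m` generated by `H`, oracle gate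
`α⋆ = 𝟙{d < b}`, and fused loss satisfying `ℓ_F ≤ (1−α⋆)ℓ_B + α⋆ ℓ_D` a.e., we have
`E[ℓ_F] ≤ E[min(b, d)] ≤ min(E[ℓ_B], E[ℓ_D])`. -/
theorem entropy_gated_fusion_oracle_bound
    {Ω : Type*} {m m0 : MeasurableSpace Ω} (hm : m ≤ m0)
    (μ : Measure Ω) [IsProbabilityMeasure μ]
    (ℓB ℓD ℓF : Ω → ℝ)
    (hB : Integrable ℓB μ) (hD : Integrable ℓD μ) (hF : Integrable ℓF μ)
    (b d αstar : Ω → ℝ)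
    (hb : b = μ[ℓB | m]) (hd : d = μ[ℓD | m])
    (hαstar : ∀ ω, αstar ω = if d ω < b ω then (1 : ℝ) else 0)
    (hle : ∀ᵐ ω ∂μ, ℓF ω ≤ (1 - αstar ω) * ℓB ω + αstar ω * ℓD ω) :
    (∫ ω, ℓF ω ∂μ ≤ ∫ ω, min (b ω) (d ω) ∂μ) ∧
    (∫ ω, min (b ω) (d ω) ∂μ ≤ min (∫ ω, ℓB ω ∂μ) (∫ ω, ℓD ω ∂μ)) := by
  haveI : IsFiniteMeasure (μ.trim hm) := isFiniteMeasure_trim hm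
  have hbi : Integrable b μ := hb ▸ integrable_condExp
  have hdi : Integrable d μ := hd ▸ integrable_condExp
  have hmin : Integrable (fun ω => min (b ω) (d ω)) μ := hbi.inf hdi
  -- the m-measurable set where d < b
  set S : Set Ω := {ω | d ω < b ω} with hSdef
  have hbm : StronglyMeasurable[m] b := hb ▸ stronglyMeasurable_condExp
  have hdm : StronglyMeasurable[m] d := hd ▸ stronglyMeasurable_condExp
  have hSm : MeasurableSet[m] S := measurableSet_lt hdm.measurable hbm.measurable
  have hS : MeasurableSet S := hm _ hSm
  -- the mixture function equals the piecewise function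
  have hgeq : ∀ ω, (1 - αstar ω) * ℓB ω + αstar ω * ℓD ω = S.piecewise ℓD ℓB ω := by
    intro ω
    by_cases h : ω ∈ S
    · have h' : d ω < b ω := h
      rw [Set.piecewise_eq_of_mem _ _ _ h, hαstar ω, if_pos h']; ring
    · have h' : ¬ d ω < b ω := h
      rw [Set.piecewise_eq_of_notMem _ _ _ h, hαstar ω, if_neg h']; ring
  have hgi : Integrable (S.piecewise ℓD ℓB) μ := by
    have heq : S.piecewise ℓD ℓB = fun ω => S.indicator ℓD ω + Sᶜ.indicator ℓB ω := by
      funext ω; by_cases h : ω ∈ S <;> simp [Set.piecewise, Set.indicator, h]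
    rw [heq]; exact (hD.indicator hS).add (hB.indicator hS.compl)
  have h1 : ∫ ω, ℓF ω ∂μ ≤ ∫ ω, S.piecewise ℓD ℓB ω ∂μ := by
    refine integral_mono_ae hF hgi ?_
    filter_upwards [hle] with ω hω
    calc ℓF ω ≤ (1 - αstar ω) * ℓB ω + αstar ω * ℓD ω := hω
    _ = _ := hgeq ω
  -- split integrals over S and Sᶜ
  have hsplit_g : ∫ ω, S.piecewise ℓD ℓB ω ∂μ
      = (∫ ω in S, ℓD ω ∂μ) + ∫ ω in Sᶜ, ℓB ω ∂μ := by
    rw [← integral_add_compl hS hgi]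
    congr 1
    · exact setIntegral_congr_fun hS (fun ω hω => Set.piecewise_eq_of_mem _ _ _ hω)
    · exact setIntegral_congr_fun hS.compl (fun ω hω => Set.piecewise_eq_of_notMem _ _ _ hω)
  have hsplit_min : ∫ ω, min (b ω) (d ω) ∂μ
      = (∫ ω in S, d ω ∂μ) + ∫ ω in Sᶜ, b ω ∂μ := by
    rw [← integral_add_compl hS hmin]
    congr 1
    · exact setIntegral_congr_fun hS (fun ω hω => min_eq_right (le_of_lt hω))
    · exact setIntegral_congr_fun hS.compl (fun ω hω => min_eq_left (not_lt.mp hω))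
  have hSd : ∫ ω in S, d ω ∂μ = ∫ ω in S, ℓD ω ∂μ := by
    rw [hd]; exact setIntegral_condExp hm hD hSm
  have hScb : ∫ ω in Sᶜ, b ω ∂μ = ∫ ω in Sᶜ, ℓB ω ∂μ := by
    rw [hb]; exact setIntegral_condExp hm hB hSm.compl
  constructor
  · rw [hsplit_min, hSd, hScb, ← hsplit_g]; exact h1
  · refine le_min ?_ ?_
    · calc ∫ ω, min (b ω) (d ω) ∂μ ≤ ∫ ω, b ω ∂μ :=
        integral_mono hmin hbi (fun ω => min_le_left _ _)
      _ = ∫ ω, ℓB ω ∂μ := by rw [hb]; exact integral_condExp hm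
    · calc ∫ ω, min (b ω) (d ω) ∂μ ≤ ∫ ω, d ω ∂μ :=
        integral_mono hmin hdi (fun ω => min_le_right _ _)
      _ = ∫ ω, ℓD ω ∂μ := by rw [hd]; exact integral_condExp hm
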